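/- Let f : ℝ^d → ℝ be (H0,H1)-smooth with H0, H1 > 0 and f* := inf f > −∞. Then for every x ∈ ℝ^d, ‖∇f(x)‖ ≤ H0/(2√H1) + (3√H1/2)·(f(x) − f*). -/

import Mathlib

open scoped RealInnerProductSpace

noncomputable section

set_option maxHeartbeats 1000000

/-- If `f` is `(H0,H1)`-smooth with `H0, H1 > 0` and bounded
below, then `‖∇f(x)‖ ≤ H0/(2√H1) + (3√H1/2)(f(x) - f*)` for all `x`. -/
theorem grad_norm_bound_H0H1
    {d : ℕ}
    (f : EuclideanSpace ℝ (Fin d) → ℝ)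
    (f' : EuclideanSpace ℝ (Fin d) → EuclideanSpace ℝ (Fin d))
    (H0 H1 : ℝ)
    (hH0 : 0 < H0) (hH1 : 0 < H1)
    (hgrad : ∀ y, HasGradientAt f (f' y) y)
    (hbdd : BddBelow (Set.range f))
    (hsmooth : ∀ y z : EuclideanSpace ℝ (Fin d),
      Real.sqrt H1 * ‖z - y‖ ≤ 1 →
      ‖f' z - f' y‖ ≤ (H0 + H1 * (f y - ⨅ w, f w)) * ‖z - y‖) :
    ∀ x : EuclideanSpace ℝ (Fin d),
      ‖f' x‖ ≤ H0 / (2 * Real.sqrt H1) +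
        3 * Real.sqrt H1 / 2 * (f x - ⨅ w, f w) := by
  intro x
  obtain ⟨s, hs⟩ : ∃ s, s = Real.sqrt H1 := ⟨_, rfl⟩
  obtain ⟨fs, hfs⟩ : ∃ v, v = ⨅ w, f w := ⟨_, rfl⟩
  rw [← hs, ← hfs] at hsmooth ⊢
  have hs0 : 0 < s := hs ▸ Real.sqrt_pos.2 hH1
  have hs2 : s * s = H1 := hs ▸ Real.mul_self_sqrt hH1.le
  have hle : ∀ y, fs ≤ f y := fun y => hfs ▸ ciInf_le hbdd y
  obtain ⟨Δ, hΔ⟩ : ∃ v, v = f x - fs := ⟨_, rfl⟩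
  have hΔ0 : 0 ≤ Δ := hΔ ▸ sub_nonneg.2 (hle x)
  obtain ⟨L, hL⟩ : ∃ v, v = H0 + H1 * Δ := ⟨_, rfl⟩
  have hL0 : 0 < L := by rw [hL]; positivity
  rw [← hΔ]
  -- continuity of f'
  have hcont : Continuous f' := by
    refine continuous_iff_continuousAt.2 fun y => ?_
    refine continuousAt_of_locally_lipschitz (show (0:ℝ) < 1 / s by positivity)
      (H0 + H1 * (f y - fs)) fun z hz => ?_
    rw [dist_eq_norm, dist_eq_norm]
    refine hsmooth y z ?_
    rw [dist_eq_norm] at hz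
    calc s * ‖z - y‖ ≤ s * (1 / s) := mul_le_mul_of_nonneg_left hz.le hs0.le
    _ = 1 := by field_simp
  -- descent lemma
  have key : ∀ h : EuclideanSpace ℝ (Fin d), s * ‖h‖ ≤ 1 →
      f (x + h) ≤ f x + ⟪f' x, h⟫ + L / 2 * ‖h‖ ^ 2 := by
    intro h hh
    have hφ : ∀ t : ℝ, HasDerivAt (fun t : ℝ => f (x + t • h))
        ⟪f' (x + t • h), h⟫ t := by
      intro t
      have hψ : HasDerivAt (fun t : ℝ => x + t • h) h t := by
        simpa using ((hasDerivAt_id t).smul_const h).const_add x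
      have := (hgrad (x + t • h)).hasFDerivAt.comp_hasDerivAt t hψ
      simpa [InnerProductSpace.toDual_apply_apply, Function.comp_def] using this
    have hci : Continuous fun t : ℝ => ⟪f' (x + t • h), h⟫ := by
      exact (hcont.comp (continuous_const.add (continuous_id.smul continuous_const))).inner continuous_const
    have hftc : ∫ t in (0:ℝ)..1, ⟪f' (x + t • h), h⟫ =
        f (x + h) - f x := by
      have := intervalIntegral.integral_eq_sub_of_hasDerivAt
        (f := fun t : ℝ => f (x + t • h)) (fun t _ => hφ t)
        (hci.intervalIntegrable 0 1)
      simpa using this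
    have hmono : ∫ t in (0:ℝ)..1, ⟪f' (x + t • h), h⟫ ≤
        ∫ t in (0:ℝ)..1, (⟪f' x, h⟫ + L * ‖h‖ ^ 2 * t) := by
      refine intervalIntegral.integral_mono_on zero_le_one
        (hci.intervalIntegrable 0 1)
        ((continuous_const.add (continuous_const.mul continuous_id) : Continuous fun t : ℝ => ⟪f' x, h⟫ + L * ‖h‖ ^ 2 * t).intervalIntegrable 0 1)
        fun t ht => ?_
      obtain ⟨ht0, ht1⟩ := ht
      have hsb : s * ‖x + t • h - x‖ ≤ 1 := by
        have : ‖x + t • h - x‖ = t * ‖h‖ := by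
          rw [add_sub_cancel_left, norm_smul, Real.norm_eq_abs, abs_of_nonneg ht0]
        rw [this]
        calc s * (t * ‖h‖) ≤ s * (1 * ‖h‖) := by
              refine mul_le_mul_of_nonneg_left (by nlinarith [norm_nonneg h]) hs0.le
        _ = s * ‖h‖ := by ring_nf
        _ ≤ 1 := hh
      have hlip := hsmooth x (x + t • h) hsb
      rw [← hΔ, ← hL] at hlip
      have hnorm : ‖x + t • h - x‖ = t * ‖h‖ := by
        rw [add_sub_cancel_left, norm_smul, Real.norm_eq_abs, abs_of_nonneg ht0]
      rw [hnorm] at hlip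
      have hdecomp : ⟪f' (x + t • h), h⟫ =
          ⟪f' x, h⟫ + ⟪f' (x + t • h) - f' x, h⟫ := by
        rw [inner_sub_left]; ring
      rw [hdecomp]
      have hCS : ⟪f' (x + t • h) - f' x, h⟫ ≤ ‖f' (x + t • h) - f' x‖ * ‖h‖ :=
        real_inner_le_norm _ _
      have hfin : ⟪f' (x + t • h) - f' x, h⟫ ≤ L * ‖h‖ ^ 2 * t := by
        calc ⟪f' (x + t • h) - f' x, h⟫ ≤ ‖f' (x + t • h) - f' x‖ * ‖h‖ :=
              real_inner_le_norm _ _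
        _ ≤ L * (t * ‖h‖) * ‖h‖ := mul_le_mul_of_nonneg_right hlip (norm_nonneg h)
        _ = L * ‖h‖ ^ 2 * t := by ring
      linarith
    have hrhs : ∫ t in (0:ℝ)..1, (⟪f' x, h⟫ + L * ‖h‖ ^ 2 * t) =
        ⟪f' x, h⟫ + L / 2 * ‖h‖ ^ 2 := by
      have h1 : IntervalIntegrable (fun t : ℝ => L * ‖h‖ ^ 2 * t)
          MeasureTheory.volume 0 1 :=
        (continuous_const.mul continuous_id).intervalIntegrable 0 1
      rw [intervalIntegral.integral_add intervalIntegrable_const h1,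
        intervalIntegral.integral_const,
        intervalIntegral.integral_const_mul, integral_id]
      norm_num
      ring
    rw [hftc] at hmono
    rw [hrhs] at hmono
    linarith
  obtain ⟨g, hg⟩ : ∃ v, v = ‖f' x‖ := ⟨_, rfl⟩
  rw [← hg]
  have hg0 : 0 ≤ g := hg ▸ norm_nonneg _
  obtain ⟨T, hT⟩ : ∃ v, v = H0 / (2 * s) + 3 * s / 2 * Δ := ⟨_, rfl⟩
  rw [show H0 / (2 * s) + 3 * s / 2 * Δ = T from hT.symm]
  have hsT : 2 * s * T = H0 + 3 * H1 * Δ := by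
    have hne : (2 : ℝ) * s ≠ 0 := by positivity
    rw [hT, mul_add, mul_div_cancel₀ _ hne, ← hs2]; ring
  have hT0 : 0 < T := by
    rw [hT]
    have h1 : 0 < H0 / (2 * s) := by positivity
    nlinarith [mul_nonneg (mul_nonneg (by norm_num : (0:ℝ) ≤ 3/2) hs0.le) hΔ0]
  rcases eq_or_lt_of_le hg0 with hgz | hgpos
  · linarith [hgz.symm ▸ hT0.le]
  by_cases hc : g * s ≤ L
  · -- small gradient case: step size g/L
    obtain ⟨h, hh⟩ : ∃ v : EuclideanSpace ℝ (Fin d), v = -((1 / L) • f' x) := ⟨_, rfl⟩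
    have hnh : ‖h‖ = g / L := by
      rw [hh, norm_neg, norm_smul, Real.norm_eq_abs,
        abs_of_pos (by positivity : (0:ℝ) < 1/L), ← hg]
      ring
    have hcond : s * ‖h‖ ≤ 1 := by
      rw [hnh, ← mul_div_assoc, div_le_one hL0, mul_comm]
      exact hc
    have hinner : ⟪f' x, h⟫ = -(g ^ 2 / L) := by
      rw [hh, inner_neg_right, real_inner_smul_right, real_inner_self_eq_norm_sq, ← hg]
      ring
    have := key h hcond
    rw [hinner, hnh] at this
    have hfb := hle (x + h)
    have hkey2 : g ^ 2 ≤ 2 * L * Δ := by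
      have hL2 : L ≠ 0 := hL0.ne'
      have h1 : f x + -(g ^ 2 / L) + L / 2 * (g / L) ^ 2 = f x - g ^ 2 / (2 * L) := by
        field_simp; ring
      rw [h1] at this
      have : fs ≤ f x - g ^ 2 / (2 * L) := le_trans hfb this
      have := sub_nonneg.2 this
      have h2 : 0 ≤ Δ - g ^ 2 / (2 * L) := by rw [hΔ]; linarith
      have h3 : g ^ 2 / (2 * L) ≤ Δ := by linarith
      calc g ^ 2 ≤ Δ * (2 * L) := (div_le_iff₀ (by positivity)).mp h3
      _ = 2 * L * Δ := by ring
    -- g² ≤ 2LΔ ⟹ g ≤ T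
    have h4 : 4 * (s * s) * g ^ 2 ≤ 4 * (s * s) * (2 * L * Δ) := by nlinarith [hs2]
    have h5 : (2 * s * g) ^ 2 ≤ (2 * s * T) ^ 2 := by
      rw [hsT]
      nlinarith [sq_nonneg (H0 - H1 * Δ), hs2]
    have hs4 : 0 < 4 * (s * s) := by positivity
    have h6 : g ^ 2 ≤ T ^ 2 := by
      by_contra hlt
      push_neg at hlt
      nlinarith [mul_lt_mul_of_pos_left hlt hs4, h5]
    calc g = Real.sqrt (g ^ 2) := (Real.sqrt_sq hg0).symm
    _ ≤ Real.sqrt (T ^ 2) := Real.sqrt_le_sqrt h6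
    _ = T := Real.sqrt_sq hT0.le
  · -- large gradient case: step size 1/s
    push_neg at hc
    have hsg : 0 < s * g := mul_pos hs0 hgpos
    obtain ⟨h, hh⟩ : ∃ v : EuclideanSpace ℝ (Fin d), v = -((1 / (s * g)) • f' x) := ⟨_, rfl⟩
    have hnh : ‖h‖ = 1 / s := by
      rw [hh, norm_neg, norm_smul, Real.norm_eq_abs,
        abs_of_pos (by positivity : (0:ℝ) < 1/(s*g)), ← hg]
      field_simp
    have hcond : s * ‖h‖ ≤ 1 := by
      rw [hnh, mul_one_div, div_self hs0.ne']
    have hinner : ⟪f' x, h⟫ = -(g / s) := by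
      rw [hh, inner_neg_right, real_inner_smul_right, real_inner_self_eq_norm_sq, ← hg]
      field_simp
    have := key h hcond
    rw [hinner, hnh] at this
    have hfb := hle (x + h)
    have hmain : fs ≤ f x - g / s + L / 2 * (1 / s) ^ 2 := le_trans hfb this
    -- multiply through by 2 s² = 2 H1
    have hs2' : (1 / s) ^ 2 = 1 / H1 := by
      rw [div_pow, one_pow, sq, hs2]
    rw [hs2'] at hmain
    have h6 : g / s ≤ Δ + L / (2 * H1) := by
      have : L / 2 * (1 / H1) = L / (2 * H1) := by ring
      rw [this] at hmain; rw [hΔ]; linarith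
    have h7 : 2 * H1 * (g / s) ≤ 2 * H1 * (Δ + L / (2 * H1)) := by
      nlinarith [h6, hH1]
    have h8 : 2 * H1 * (g / s) = 2 * s * g := by
      rw [← hs2]; field_simp
    have h9 : 2 * H1 * (Δ + L / (2 * H1)) = 2 * H1 * Δ + L := by
      field_simp
    rw [h8, h9] at h7
    have : 2 * s * g ≤ 2 * s * T := by
      rw [hsT]; rw [hL] at h7; linarith
    nlinarith [hs0]

end
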